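/- For the second elementary symmetric polynomial H₂ on the positive cone, the Hessian estimate D²H₂(κ)(ξ,ξ) ≤ (1/2) H₂(κ)^{-1} (DH₂(κ)·ξ)² holds for all κ ∈ Γ₊ and all ξ ∈ ℝⁿ. -/

import Mathlib

open Finset

private lemma offdiag_sum {n : ℕ} (f g : Fin n → ℝ) :
    ∑ i, ∑ j, (if i = j then (0:ℝ) else f i * g j)
      = (∑ i, f i) * (∑ i, g i) - ∑ i, f i * g i := by
  have h : ∀ i : Fin n, ∑ j, (if i = j then (0:ℝ) else f i * g j)
      = f i * (∑ j, g j) - f i * g i := by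
    intro i
    have : ∑ j, (if i = j then (0:ℝ) else f i * g j)
        = ∑ j, (f i * g j - if i = j then f i * g j else 0) := by
      apply Finset.sum_congr rfl; intro j _
      by_cases hij : i = j <;> simp [hij]
    rw [this, Finset.sum_sub_distrib, Finset.sum_ite_eq, ← Finset.mul_sum]
    simp
  rw [Finset.sum_congr rfl (fun i _ => h i), Finset.sum_sub_distrib, ← Finset.sum_mul]

private lemma pair_sum_eq {n : ℕ} (κ : Fin n → ℝ) :
    2 * ∑ p ∈ Finset.univ.filter (fun p : Fin n × Fin n => p.1 < p.2), κ p.1 * κ p.2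
      = (∑ i, κ i) ^ 2 - ∑ i, κ i ^ 2 := by
  have h1 : ∑ p ∈ Finset.univ.filter (fun p : Fin n × Fin n => p.1 < p.2), κ p.1 * κ p.2
      = ∑ i, ∑ j, (if i < j then κ i * κ j else 0) := by
    rw [Finset.sum_filter, ← Finset.univ_product_univ, Finset.sum_product]
  have h2 : ∑ i, ∑ j, (if i < j then κ i * κ j else 0)
      = ∑ i, ∑ j, (if j < i then κ i * κ j else 0) := by
    rw [Finset.sum_comm]
    apply Finset.sum_congr rfl; intro i _
    apply Finset.sum_congr rfl; intro j _
    by_cases hij : j < i <;> simp [hij, mul_comm]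
  have h3 : ∀ i j : Fin n, ((if i < j then κ i * κ j else 0) + if j < i then κ i * κ j else 0)
      = if i = j then (0:ℝ) else κ i * κ j := by
    intro i j
    rcases lt_trichotomy i j with h | h | h
    · simp [h, asymm h, ne_of_lt h]
    · simp [h, lt_irrefl]
    · simp [h, asymm h, (ne_of_lt h).symm]
  have h4 : ∑ i, ∑ j, (if i = j then (0:ℝ) else κ i * κ j)
      = (∑ i, κ i) * (∑ i, κ i) - ∑ i, κ i * κ i := offdiag_sum κ κ
  have h5 : ∑ i, κ i * κ i = ∑ i, κ i ^ 2 := by simp [sq]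
  calc 2 * ∑ p ∈ Finset.univ.filter (fun p : Fin n × Fin n => p.1 < p.2), κ p.1 * κ p.2
      = (∑ i, ∑ j, (if i < j then κ i * κ j else 0))
        + ∑ i, ∑ j, (if j < i then κ i * κ j else 0) := by rw [h1, ← h2]; ring
    _ = ∑ i, ∑ j, (if i = j then (0:ℝ) else κ i * κ j) := by
        rw [← Finset.sum_add_distrib]
        apply Finset.sum_congr rfl; intro i _
        rw [← Finset.sum_add_distrib]
        exact Finset.sum_congr rfl fun j _ => h3 i j
    _ = (∑ i, κ i) ^ 2 - ∑ i, κ i ^ 2 := by rw [h4, h5]; ring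

/-- Hessian estimate for H₂ on the positive cone:
`D²H₂(ξ,ξ) ≤ (1/2) H₂⁻¹ (DH₂·ξ)²`, where `H₂,ᵢⱼ = 1 - δᵢⱼ` and
`H₂,ᵢ = ∑_{j≠i} κⱼ`. -/
theorem H2_hessian_estimate (n : ℕ) (hn : 2 ≤ n)
    (κ : Fin n → ℝ) (hκ : ∀ i, 0 < κ i) (ξ : Fin n → ℝ) :
    ∑ i, ∑ j, (if i = j then (0 : ℝ) else 1) * ξ i * ξ j
      ≤ (1 / 2) *
        (∑ p ∈ Finset.univ.filter (fun p : Fin n × Fin n => p.1 < p.2), κ p.1 * κ p.2)⁻¹ *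
        (∑ i, (∑ j ∈ Finset.univ.filter (fun j => j ≠ i), κ j) * ξ i) ^ 2 := by
  set K := ∑ i, κ i with hK
  set P := ∑ i, κ i ^ 2 with hP
  set S := ∑ i, ξ i with hS
  set T := ∑ i, κ i * ξ i with hT
  set Q := ∑ i, ξ i ^ 2 with hQ
  set A := ∑ p ∈ Finset.univ.filter (fun p : Fin n × Fin n => p.1 < p.2), κ p.1 * κ p.2 with hA
  -- LHS = S^2 - Q
  have hQQ : ∑ i, ξ i * ξ i = Q := by simp [hQ, sq]
  have hLHS : ∑ i, ∑ j, (if i = j then (0 : ℝ) else 1) * ξ i * ξ j = S ^ 2 - Q := by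
    have h0 := offdiag_sum ξ ξ
    calc ∑ i, ∑ j, (if i = j then (0 : ℝ) else 1) * ξ i * ξ j
        = ∑ i, ∑ j, (if i = j then (0:ℝ) else ξ i * ξ j) := by
          apply Finset.sum_congr rfl; intro i _
          apply Finset.sum_congr rfl; intro j _
          by_cases hij : i = j <;> simp [hij]
      _ = S ^ 2 - Q := by rw [h0, hQQ]; ring
  -- 2A = K^2 - P
  have h2A : 2 * A = K ^ 2 - P := pair_sum_eq κ
  -- A > 0
  have hApos : 0 < A := by
    rw [hA]
    apply Finset.sum_pos
    · intro p _
      exact mul_pos (hκ p.1) (hκ p.2)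
    · refine ⟨(⟨0, by omega⟩, ⟨1, by omega⟩),
        Finset.mem_filter.mpr ⟨Finset.mem_univ _, Fin.mk_lt_mk.mpr (by omega)⟩⟩
  have hKP : 0 < K ^ 2 - P := by linarith
  -- gradient sum = K*S - T
  have hG : ∑ i, (∑ j ∈ Finset.univ.filter (fun j => j ≠ i), κ j) * ξ i = K * S - T := by
    have h1 : ∀ i : Fin n, ∑ j ∈ Finset.univ.filter (fun j => j ≠ i), κ j = K - κ i := by
      intro i
      have : Finset.univ.filter (fun j => j ≠ i) = Finset.univ.erase i := by
        ext j; simp [Finset.mem_erase, and_comm]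
      rw [this, Finset.sum_erase_eq_sub (Finset.mem_univ i), hK]
    calc ∑ i, (∑ j ∈ Finset.univ.filter (fun j => j ≠ i), κ j) * ξ i
        = ∑ i, ((K - κ i) * ξ i) := Finset.sum_congr rfl fun i _ => by rw [h1 i]
      _ = K * S - T := by
          simp only [sub_mul, Finset.sum_sub_distrib, ← Finset.mul_sum, hS, hT]
  -- core inequality: (K*S - T)^2 ≥ (K^2 - P) * (S^2 - Q)
  set c := (K * S - T) / (K ^ 2 - P) with hc
  have hcdef : c * (K ^ 2 - P) = K * S - T := by
    rw [hc, div_mul_cancel₀ _ hKP.ne']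
  set w := fun i => ξ i - c * κ i with hw
  have hWsum : ∑ i, w i = S - c * K := by
    simp only [hw]
    rw [Finset.sum_sub_distrib, ← Finset.mul_sum]
  have hκw : ∑ i, κ i * w i = T - c * P := by
    simp only [hw, mul_sub]
    rw [Finset.sum_sub_distrib]
    congr 1
    rw [hP, Finset.mul_sum]
    apply Finset.sum_congr rfl; intro i _; ring
  have hW2 : ∑ i, w i ^ 2 = Q - 2 * c * T + c ^ 2 * P := by
    have : ∀ i : Fin n, w i ^ 2 = ξ i ^ 2 - 2 * c * (κ i * ξ i) + c ^ 2 * κ i ^ 2 := by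
      intro i; simp only [hw]; ring
    rw [Finset.sum_congr rfl fun i _ => this i]
    rw [Finset.sum_add_distrib, Finset.sum_sub_distrib, ← Finset.mul_sum, ← Finset.mul_sum]
  set W2 := ∑ i, w i ^ 2 with hW2d
  -- orthogonality
  have horth : T - c * P = K * (S - c * K) := by nlinarith [hcdef]
  -- Cauchy-Schwarz
  have hCS := Finset.sum_mul_sq_le_sq_mul_sq Finset.univ κ w
  rw [hκw, ← hP, ← hW2d] at hCS
  have hW2nn : (0:ℝ) ≤ W2 := hW2d ▸ Finset.sum_nonneg fun i _ => sq_nonneg _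
  have hKpos : 0 < K := by
    rw [hK]
    exact Finset.sum_pos (fun i _ => hκ i) ⟨⟨0, by omega⟩, Finset.mem_univ _⟩
  clear_value K P S T Q A c W2
  clear hW2d hw hK hP hS hT hQ hA hc hWsum hκw
  have hK2 : 0 < K ^ 2 := by positivity
  rw [horth] at hCS
  -- (S - c*K)^2 ≤ W2
  have hkey : (S - c * K) ^ 2 ≤ W2 := by
    nlinarith [hCS, mul_nonneg hKP.le hW2nn, hK2]
  -- conclude S^2 - Q ≤ c^2 * (K^2 - P)
  have hid : S ^ 2 - Q = (S - c * K) ^ 2 - W2 + c ^ 2 * (K ^ 2 - P) := by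
    linear_combination hW2 - 2 * c * hcdef
  have hfin : S ^ 2 - Q ≤ c ^ 2 * (K ^ 2 - P) := by
    rw [hid]; linarith [hkey]
  -- RHS equals c^2 * (K^2 - P)
  rw [hLHS, hG]
  have hAne : A ≠ 0 := ne_of_gt hApos
  have hRHS : (1 / 2) * A⁻¹ * (K * S - T) ^ 2 = c ^ 2 * (K ^ 2 - P) := by
    rw [← hcdef, show K ^ 2 - P = 2 * A from h2A.symm]
    field_simp
  rw [hRHS]
  exact hfin
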